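/- Let 𝔄 be a structure, X a team, and x̄⊥_z̄ȳ a conditional independence atom. Suppose Y⊆X is such that every pair s₁,s₂∈Y with s₁(z̄)=s₂(z̄) has a witness in X, i.e., there exists s₃∈X with s₃(z̄)=s₁(z̄), s₃(x̄)=s₁(x̄), s₃(ȳ)=s₂(ȳ). Then there exists a team Y' with Y⊆Y'⊆X such that 𝔄⊨_{Y'} x̄⊥_z̄ȳ, obtained by iteratively adding witnesses; moreover each added witness remains pairwise witnessed (in X) with every previously added assignment. -/

import Mathlib

/- Statement 4.  If every pair of assignments of `Y ⊆ X` agreeing on `z̄` has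
a witness (for the atom `x̄ ⊥_z̄ ȳ`) in `X`, then `Y` can be extended to a
team `Y'` with `Y ⊆ Y' ⊆ X` satisfying `x̄ ⊥_z̄ ȳ`, in such a way that every
pair of assignments of `Y'` agreeing on `z̄` still has a witness in `X`. -/

/-- Team satisfaction of the conditional independence atom `x̄ ⊥_z̄ ȳ`. -/
def indepSat {V A : Type*} (xs ys zs : List V) (X : Set (V → A)) : Prop :=
  ∀ s ∈ X, ∀ s' ∈ X, zs.map s = zs.map s' →
    ∃ s'' ∈ X, zs.map s'' = zs.map s ∧ xs.map s'' = xs.map s ∧ ys.map s'' = ys.map s'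

theorem extend_to_indep_team {V A : Type*} (xs ys zs : List V)
    (X Y : Set (V → A)) (hX : X.Finite) (hYX : Y ⊆ X)
    (h : ∀ s₁ ∈ Y, ∀ s₂ ∈ Y, zs.map s₁ = zs.map s₂ →
      ∃ s₃ ∈ X, zs.map s₃ = zs.map s₁ ∧ xs.map s₃ = xs.map s₁ ∧
        ys.map s₃ = ys.map s₂) :
    ∃ Y' : Set (V → A), Y ⊆ Y' ∧ Y' ⊆ X ∧ indepSat xs ys zs Y' ∧
      (∀ s₁ ∈ Y', ∀ s₂ ∈ Y', zs.map s₁ = zs.map s₂ →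
        ∃ s₃ ∈ X, zs.map s₃ = zs.map s₁ ∧ xs.map s₃ = xs.map s₁ ∧
          ys.map s₃ = ys.map s₂) := by
  set P : Set (V → A) → Prop := fun Z =>
    ∀ s₁ ∈ Z, ∀ s₂ ∈ Z, zs.map s₁ = zs.map s₂ →
      ∃ s₃ ∈ X, zs.map s₃ = zs.map s₁ ∧ xs.map s₃ = xs.map s₁ ∧
        ys.map s₃ = ys.map s₂ with hP
  set S : Set (Set (V → A)) := {Z | Y ⊆ Z ∧ Z ⊆ X ∧ P Z} with hS
  have hSfin : S.Finite := by
    apply (Set.Finite.finite_subsets hX).subset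
    intro Z hZ; exact hZ.2.1
  have hYS : Y ∈ S := ⟨subset_rfl, hYX, h⟩
  obtain ⟨Y', hY'S, hmax⟩ : ∃ a ∈ S, ∀ a' ∈ S, id a ≤ id a' → id a = id a' := by
    obtain ⟨a, ha, hm⟩ := hSfin.exists_maximalFor id S ⟨Y, hYS⟩
    exact ⟨a, ha, fun a' ha' hle => le_antisymm hle (hm ha' hle)⟩
  obtain ⟨hYY', hY'X, hPY'⟩ := hY'S
  refine ⟨Y', hYY', hY'X, ?_, hPY'⟩
  intro s hs s' hs' hzz
  obtain ⟨s₃, hs₃X, hz3, hx3, hy3⟩ := hPY' s hs s' hs' hzz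
  -- show Y' ∪ {s₃} still has property P, so by maximality s₃ ∈ Y'
  have hmem : s₃ ∈ Y' := by
    have hP' : P (insert s₃ Y') := by
      intro t₁ ht₁ t₂ ht₂ hz12
      rcases ht₁ with h1 | h1 <;> rcases ht₂ with h2 | h2
      · exact ⟨s₃, hs₃X, by rw [h1], by rw [h1], by rw [h2]⟩
      · obtain ⟨u, huX, huz, hux, huy⟩ := hPY' s hs t₂ h2 (by rw [← hz3, ← h1, hz12])
        exact ⟨u, huX, by rw [huz, ← hz3, ← h1], by rw [hux, ← hx3, ← h1], huy⟩
      · obtain ⟨u, huX, huz, hux, huy⟩ := hPY' t₁ h1 s' hs' (by rw [hz12, h2, hz3, hzz])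
        exact ⟨u, huX, huz, hux, by rw [huy, ← hy3, ← h2]⟩
      · exact hPY' t₁ h1 t₂ h2 hz12
    have hins : insert s₃ Y' ∈ S :=
      ⟨hYY'.trans (Set.subset_insert _ _),
        Set.insert_subset hs₃X hY'X, hP'⟩
    have := hmax (insert s₃ Y') hins (Set.subset_insert _ _)
    simp only [id] at this
    rw [this]; exact Set.mem_insert _ _
  exact ⟨s₃, hmem, hz3, hx3, hy3⟩
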